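/- If N_1 is stochastically larger than N_2 (i.e., P(N_1 ≥ x) ≥ P(N_2 ≥ x) for all x ≥ 0), then there exists a Markov chain X^q — X^{N_1} — Y such that Y has the same conditional distribution given X^q as X^{N_2}; i.e., the q-bit layered erasure broadcast channel (N_1, N_2) is degraded. -/

import Mathlib

open Finset

attribute [local instance] Classical.propDecidable

/-- The output of a layered erasure channel in state `n`: first `n` bits of `x`. -/
def trunc {q : ℕ} (x : Fin q → Bool) (n : Fin (q+1)) : Fin q → Option Bool :=
  fun i => if (i : ℕ) < (n : ℕ) then some (x i) else none

lemma card_lt_aux (q k : ℕ) (hk : k ≤ q) :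
    (univ.filter fun i : Fin q => (i:ℕ) < k).card = k := by
  rw [Finset.card_filter, Fin.sum_univ_eq_sum_range (fun i => if i < k then 1 else 0)]
  have h : (range q).filter (fun i => i < k) = range k := by
    ext i; simp only [mem_filter, mem_range]; omega
  rw [← Finset.sum_filter, h]
  simp

lemma step_lemma (a b t t' : ℝ) (hab : a ≤ b) (htt : t ≤ t') :
    max 0 (min b t' - max a t) = max 0 (min b t' - a) - max 0 (min b t - a) := by
  simp only [min_def, max_def]
  split_ifs <;> linarith

lemma partition_lemma (q : ℕ) (G : ℕ → ℝ) (hmono : ∀ k, G k ≤ G (k+1)) (hG0 : G 0 = 0)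
    (a b : ℝ) (h0a : 0 ≤ a) (hab : a ≤ b) (hb : b ≤ G (q+1)) :
    ∑ m ∈ range (q+1), max 0 (min b (G (m+1)) - max a (G m)) = b - a := by
  have h : ∀ m ∈ range (q+1), max 0 (min b (G (m+1)) - max a (G m))
      = (fun k => max 0 (min b (G k) - a)) (m+1) - (fun k => max 0 (min b (G k) - a)) m := by
    intro m _
    exact step_lemma a b (G m) (G (m+1)) hab (hmono m)
  rw [Finset.sum_congr rfl h, Finset.sum_range_sub (fun k => max 0 (min b (G k) - a))]
  simp only [hG0]
  rw [min_eq_left hb, max_eq_right (by linarith)]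
  have h2 : min b 0 - a ≤ 0 := by
    rcases le_total b 0 with h | h
    · rw [min_eq_left h]; linarith
    · rw [min_eq_right h]; linarith
  rw [max_eq_left h2]
  ring

lemma Gfin_aux (q k : ℕ) (hk : k ≤ q + 1) (f : Fin (q+1) → ℝ) :
    (∑ i ∈ range k, if h : i < q+1 then f ⟨i,h⟩ else 0)
      = ∑ m ∈ univ.filter (fun m : Fin (q+1) => (m:ℕ) < k), f m := by
  have h : (range (q+1)).filter (fun i => i < k) = range k := by
    ext i; simp only [mem_filter, mem_range]; omega
  calc (∑ i ∈ range k, if h : i < q+1 then f ⟨i,h⟩ else 0)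
      = ∑ i ∈ range (q+1), (if i < k then (if h : i < q+1 then f ⟨i,h⟩ else 0) else 0) := by
        rw [← Finset.sum_filter, h]
    _ = ∑ m : Fin (q+1), (if (m:ℕ) < k then (if h : (m:ℕ) < q+1 then f ⟨m,h⟩ else 0) else 0) :=
        (Fin.sum_univ_eq_sum_range _ _).symm
    _ = ∑ m : Fin (q+1), (if (m:ℕ) < k then f m else 0) := by
        apply Finset.sum_congr rfl; intro m _
        rw [dif_pos m.isLt]
    _ = _ := (Finset.sum_filter _ _).symm

lemma exists_coupling (q : ℕ) (f1 f2 : Fin (q+1) → ℝ)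
    (hf1n : ∀ n, 0 ≤ f1 n) (hf1s : ∑ n, f1 n = 1)
    (hf2n : ∀ n, 0 ≤ f2 n) (hf2s : ∑ n, f2 n = 1)
    (hdom : ∀ n : Fin (q+1),
      ∑ m ∈ univ.filter (fun m => n ≤ m), f2 m ≤ ∑ m ∈ univ.filter (fun m => n ≤ m), f1 m) :
    ∃ π : Fin (q+1) → Fin (q+1) → ℝ,
      (∀ n m, 0 ≤ π n m) ∧ (∀ n, ∑ m, π n m = f1 n) ∧ (∀ m, ∑ n, π n m = f2 m) ∧
      (∀ n m : Fin (q+1), (n:ℕ) < (m:ℕ) → π n m = 0) := by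
  classical
  set g1 : ℕ → ℝ := fun k => if h : k < q+1 then f1 ⟨k,h⟩ else 0 with hg1
  set g2 : ℕ → ℝ := fun k => if h : k < q+1 then f2 ⟨k,h⟩ else 0 with hg2
  set G1 : ℕ → ℝ := fun k => ∑ i ∈ range k, g1 i with hG1
  set G2 : ℕ → ℝ := fun k => ∑ i ∈ range k, g2 i with hG2
  have hg1n : ∀ k, 0 ≤ g1 k := by
    intro k; rw [hg1]; dsimp only; split
    · exact hf1n _
    · exact le_rfl
  have hg2n : ∀ k, 0 ≤ g2 k := by
    intro k; rw [hg2]; dsimp only; split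
    · exact hf2n _
    · exact le_rfl
  have hmono1 : ∀ k, G1 k ≤ G1 (k+1) := by
    intro k; rw [hG1]; dsimp only; rw [Finset.sum_range_succ]
    have := hg1n k; linarith
  have hmono2 : ∀ k, G2 k ≤ G2 (k+1) := by
    intro k; rw [hG2]; dsimp only; rw [Finset.sum_range_succ]
    have := hg2n k; linarith
  have hMono1 : Monotone G1 := monotone_nat_of_le_succ hmono1
  have hMono2 : Monotone G2 := monotone_nat_of_le_succ hmono2
  have hG10 : G1 0 = 0 := Finset.sum_range_zero _
  have hG20 : G2 0 = 0 := Finset.sum_range_zero _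
  have hfull : filter (fun m : Fin (q+1) => (m:ℕ) < q+1) univ = univ :=
    Finset.filter_true_of_mem (fun m _ => m.isLt)
  have hGtop1 : G1 (q+1) = 1 := by
    rw [hG1]; dsimp only
    rw [Gfin_aux q (q+1) le_rfl f1, hfull, hf1s]
  have hGtop2 : G2 (q+1) = 1 := by
    rw [hG2]; dsimp only
    rw [Gfin_aux q (q+1) le_rfl f2, hfull, hf2s]
  have hG1nn : ∀ k, 0 ≤ G1 k := fun k => Finset.sum_nonneg (fun i _ => hg1n i)
  have hGle : ∀ k, k ≤ q + 1 → G1 k ≤ G2 k := by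
    intro k hk
    rcases eq_or_lt_of_le hk with h | h
    · rw [h, hGtop1, hGtop2]
    · have hk' : k < q + 1 := h
      have hd := hdom ⟨k, hk'⟩
      have hnot : ∀ f : Fin (q+1) → ℝ,
          ∑ m ∈ filter (fun m => (⟨k,hk'⟩ : Fin (q+1)) ≤ m) univ, f m
            + ∑ m ∈ filter (fun m : Fin (q+1) => (m:ℕ) < k) univ, f m = ∑ m, f m := by
        intro f
        have := Finset.sum_filter_add_sum_filter_not univ
          (fun m => (⟨k,hk'⟩ : Fin (q+1)) ≤ m) f
        have heq : filter (fun m => ¬ (⟨k,hk'⟩ : Fin (q+1)) ≤ m) univ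
            = filter (fun m : Fin (q+1) => (m:ℕ) < k) univ := by
          apply Finset.filter_congr; intro m _
          simp [Fin.le_def, Nat.not_le]
        rw [heq] at this; exact this
      have e1 : G1 k = ∑ m ∈ filter (fun m : Fin (q+1) => (m:ℕ) < k) univ, f1 m := by
        rw [hG1]; dsimp only; exact Gfin_aux q k hk f1
      have e2 : G2 k = ∑ m ∈ filter (fun m : Fin (q+1) => (m:ℕ) < k) univ, f2 m := by
        rw [hG2]; dsimp only; exact Gfin_aux q k hk f2
      have h1 := hnot f1
      have h2 := hnot f2
      rw [hf1s] at h1; rw [hf2s] at h2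
      rw [e1, e2]; linarith
  refine ⟨fun n m => max 0 (min (G1 ((n:ℕ)+1)) (G2 ((m:ℕ)+1)) - max (G1 (n:ℕ)) (G2 (m:ℕ))),
    fun n m => le_max_left _ _, ?_, ?_, ?_⟩
  · intro n
    rw [Fin.sum_univ_eq_sum_range
      (fun m => max 0 (min (G1 ((n:ℕ)+1)) (G2 (m+1)) - max (G1 (n:ℕ)) (G2 m)))]
    rw [partition_lemma q G2 hmono2 hG20 (G1 (n:ℕ)) (G1 ((n:ℕ)+1)) (hG1nn _)
      (hmono1 _) (by rw [hGtop2, ← hGtop1]; exact hMono1 (by omega))]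
    rw [hG1]; dsimp only; rw [Finset.sum_range_succ]
    rw [hg1]; dsimp only; rw [dif_pos n.isLt]
    simp
  · intro m
    have hcomm : ∀ n : Fin (q+1),
        max 0 (min (G1 ((n:ℕ)+1)) (G2 ((m:ℕ)+1)) - max (G1 (n:ℕ)) (G2 (m:ℕ)))
          = max 0 (min (G2 ((m:ℕ)+1)) (G1 ((n:ℕ)+1)) - max (G2 (m:ℕ)) (G1 (n:ℕ))) := by
      intro n; rw [min_comm, max_comm (G1 (n:ℕ))]
    rw [Finset.sum_congr rfl (fun n _ => hcomm n)]
    rw [Fin.sum_univ_eq_sum_range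
      (fun n => max 0 (min (G2 ((m:ℕ)+1)) (G1 (n+1)) - max (G2 (m:ℕ)) (G1 n)))]
    rw [partition_lemma q G1 hmono1 hG10 (G2 (m:ℕ)) (G2 ((m:ℕ)+1))
      (Finset.sum_nonneg (fun i _ => hg2n i))
      (hmono2 _) (by rw [hGtop1, ← hGtop2]; exact hMono2 (by omega))]
    rw [hG2]; dsimp only; rw [Finset.sum_range_succ]
    rw [hg2]; dsimp only; rw [dif_pos m.isLt]
    simp
  · intro n m hnm
    apply max_eq_left
    apply sub_nonpos.mpr
    calc min (G1 ((n:ℕ)+1)) (G2 ((m:ℕ)+1)) ≤ G1 ((n:ℕ)+1) := min_le_left _ _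
      _ ≤ G1 (m:ℕ) := hMono1 (by omega)
      _ ≤ G2 (m:ℕ) := hGle _ (by omega)
      _ ≤ max (G1 (n:ℕ)) (G2 (m:ℕ)) := le_max_right _ _

/-- If `N₁` is stochastically larger than `N₂`, then the `q`-bit layered
erasure broadcast channel `(N₁, N₂)` is degraded: there exists a stochastic kernel `K`
(a Markov chain `X^q — X^{N₁} — Y`) such that composing the channel to receiver 1 with
`K` yields exactly the conditional distribution of `X^{N₂}` given `X^q`. -/
theorem layered_erasure_degraded {q : ℕ} (f1 f2 : Fin (q+1) → ℝ)
    (hf1 : (∀ n, 0 ≤ f1 n) ∧ ∑ n, f1 n = 1)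
    (hf2 : (∀ n, 0 ≤ f2 n) ∧ ∑ n, f2 n = 1)
    (hdom : ∀ n : Fin (q+1),
      ∑ m ∈ univ.filter (fun m => n ≤ m), f2 m ≤ ∑ m ∈ univ.filter (fun m => n ≤ m), f1 m) :
    ∃ K : (Fin q → Option Bool) → (Fin q → Option Bool) → ℝ,
      (∀ y z, 0 ≤ K y z) ∧ (∀ y, ∑ z, K y z = 1) ∧
      ∀ (x : Fin q → Bool) (z : Fin q → Option Bool),
        (∑ n, if trunc x n = z then f2 n else 0)
          = ∑ y, (∑ n, if trunc x n = y then f1 n else 0) * K y z := by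
  classical
  obtain ⟨hf1n, hf1s⟩ := hf1
  obtain ⟨hf2n, hf2s⟩ := hf2
  obtain ⟨π, hπ0, hrow, hcol, hsupp⟩ := exists_coupling q f1 f2 hf1n hf1s hf2n hf2s hdom
  set w : Fin (q+1) → Fin (q+1) → ℝ :=
    fun n m => if f1 n = 0 then (if m = n then 1 else 0) else π n m / f1 n with hw
  have hw0 : ∀ n m, 0 ≤ w n m := by
    intro n m; rw [hw]; dsimp only; split
    · split
      · exact zero_le_one
      · exact le_rfl
    · exact div_nonneg (hπ0 n m) (hf1n n)
  have hwsum : ∀ n, ∑ m, w n m = 1 := by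
    intro n; rw [hw]; dsimp only
    by_cases h : f1 n = 0
    · simp [h]
    · simp only [if_neg h]
      rw [← Finset.sum_div, hrow, div_self h]
  have hwmul : ∀ n m, f1 n * w n m = π n m := by
    intro n m; rw [hw]; dsimp only
    by_cases h : f1 n = 0
    · rw [if_pos h, h, zero_mul]
      symm
      have hz : ∑ m', π n m' = 0 := by rw [hrow, h]
      exact (Finset.sum_eq_zero_iff_of_nonneg (fun m' _ => hπ0 n m')).mp hz m (mem_univ m)
    · rw [if_neg h, mul_div_cancel₀ _ h]
  set cnt : (Fin q → Option Bool) → Fin (q+1) :=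
    fun y => ⟨(univ.filter fun i => (y i).isSome).card, by
      have h1 : (univ.filter fun i => (y i).isSome).card ≤ (univ : Finset (Fin q)).card :=
        Finset.card_filter_le _ _
      simp only [Finset.card_univ, Fintype.card_fin] at h1
      omega⟩ with hcnt
  set rk : (Fin q → Option Bool) → Fin (q+1) → (Fin q → Option Bool) :=
    fun y m i => if (i:ℕ) < (m:ℕ) then y i else none with hrk
  refine ⟨fun y z => ∑ m, w (cnt y) m * (if rk y m = z then 1 else 0), ?_, ?_, ?_⟩
  · intro y z
    apply Finset.sum_nonneg
    intro m _
    apply mul_nonneg (hw0 _ _)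
    split
    · exact zero_le_one
    · exact le_rfl
  · intro y
    rw [Finset.sum_comm]
    have h : ∀ m : Fin (q+1),
        ∑ z : Fin q → Option Bool, w (cnt y) m * (if rk y m = z then 1 else 0)
          = w (cnt y) m := by
      intro m
      rw [← Finset.mul_sum, Finset.sum_ite_eq univ (rk y m) (fun _ => (1:ℝ)),
        if_pos (mem_univ _), mul_one]
    rw [Finset.sum_congr rfl (fun m _ => h m), hwsum]
  · intro x z
    have hcnt' : ∀ n : Fin (q+1), cnt (trunc x n) = n := by
      intro n
      apply Fin.ext
      rw [hcnt]; dsimp only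
      have heq : (univ.filter fun i : Fin q => (trunc x n i).isSome)
          = univ.filter fun i : Fin q => (i:ℕ) < (n:ℕ) := by
        apply Finset.filter_congr
        intro i _
        by_cases h : (i:ℕ) < (n:ℕ) <;> simp [trunc, h]
      rw [heq, card_lt_aux q (n:ℕ) (by omega)]
    have hrk' : ∀ n m : Fin (q+1), (m:ℕ) ≤ (n:ℕ) → rk (trunc x n) m = trunc x m := by
      intro n m hmn
      funext i
      rw [hrk]; dsimp only
      by_cases h : (i:ℕ) < (m:ℕ)
      · rw [if_pos h]
        simp [trunc, h, lt_of_lt_of_le h hmn]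
      · rw [if_neg h]
        simp [trunc, h]
    symm
    calc ∑ y, (∑ n, if trunc x n = y then f1 n else 0)
          * (∑ m, w (cnt y) m * (if rk y m = z then 1 else 0))
        = ∑ y, ∑ n, (if trunc x n = y then f1 n else 0)
          * (∑ m, w (cnt y) m * (if rk y m = z then 1 else 0)) := by
          exact Finset.sum_congr rfl (fun y _ => Finset.sum_mul _ _ _)
      _ = ∑ n, ∑ y, (if trunc x n = y then f1 n else 0)
          * (∑ m, w (cnt y) m * (if rk y m = z then 1 else 0)) := Finset.sum_comm
      _ = ∑ n : Fin (q+1), f1 n * ∑ m, w (cnt (trunc x n)) m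
            * (if rk (trunc x n) m = z then 1 else 0) := by
          apply Finset.sum_congr rfl
          intro n _
          rw [Finset.sum_congr rfl (fun y _ => ite_mul (trunc x n = y) (f1 n) 0 _),
            Finset.sum_congr rfl (fun y (_ : y ∈ univ) => by rw [zero_mul]),
            Finset.sum_ite_eq univ (trunc x n)
              (fun y => f1 n * ∑ m, w (cnt y) m * (if rk y m = z then 1 else 0)),
            if_pos (mem_univ _)]
      _ = ∑ n : Fin (q+1), ∑ m, π n m * (if trunc x m = z then 1 else 0) := by
          apply Finset.sum_congr rfl
          intro n _
          rw [hcnt' n, Finset.mul_sum]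
          apply Finset.sum_congr rfl
          intro m _
          rw [← mul_assoc, hwmul]
          by_cases hmn : (m:ℕ) ≤ (n:ℕ)
          · rw [hrk' n m hmn]
          · rw [hsupp n m (by omega), zero_mul, zero_mul]
      _ = ∑ m : Fin (q+1), (∑ n, π n m) * (if trunc x m = z then 1 else 0) := by
          rw [Finset.sum_comm]
          exact Finset.sum_congr rfl (fun m _ => (Finset.sum_mul _ _ _).symm)
      _ = ∑ m, if trunc x m = z then f2 m else 0 := by
          apply Finset.sum_congr rfl
          intro m _
          rw [hcol m, mul_ite, mul_one, mul_zero]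
      _ = ∑ n, if trunc x n = z then f2 n else 0 := rfl
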